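/- For every odd prime p, every k ∈ ZMod p with k ≠ 0, all i, i' ∈ (ZMod p) ∪ {∞} and all j, j' ∈ ZMod p: if i ≠ i' then |⟨ψ_{k;i,j}, ψ_{k;i',j'}⟩| = 1/√p, while if i = i' then |⟨ψ_{k;i,j}, ψ_{k;i',j'}⟩| equals 1 when j = j' and 0 when j ≠ j'. In particular, for each fixed k the p+1 families {ψ_{k;i,j}}_{j ∈ ZMod p}, i ∈ (ZMod p) ∪ {∞}, form p+1 mutually unbiased orthonormal bases of ℂ^{ZMod p}. -/

import Mathlib

/-- `ω^v = exp(2πi·v.val/p)` for `v : ZMod p`, where `ω = exp(2πi/p)`. -/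
noncomputable def omegaPow (p : ℕ) (v : ZMod p) : ℂ :=
  Complex.exp (2 * Real.pi * Complex.I * (v.val : ℂ) / p)

section aux
variable (p : ℕ) [NeZero p]

lemma omegaPow_eq' (v : ZMod p) :
    omegaPow p v = Complex.exp (((2 * Real.pi * v.val / p : ℝ) : ℂ) * Complex.I) := by
  unfold omegaPow
  congr 1
  push_cast
  ring

lemma abs_omegaPow (v : ZMod p) : ‖omegaPow p v‖ = 1 := by
  rw [omegaPow_eq', Complex.norm_exp_ofReal_mul_I]

lemma omegaPow_zero : omegaPow p 0 = 1 := by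
  simp [omegaPow]

lemma omegaPow_add (u v : ZMod p) :
    omegaPow p (u + v) = omegaPow p u * omegaPow p v := by
  unfold omegaPow
  rw [← Complex.exp_add]
  have hp : (p : ℂ) ≠ 0 := Nat.cast_ne_zero.mpr (NeZero.ne p)
  set q : ℤ := (((u.val + v.val) / p : ℕ) : ℤ) with hq
  have hval : (u.val : ℂ) + v.val = ((u + v).val : ℂ) + p * q := by
    have : ((u + v).val + p * ((u.val + v.val) / p)) = u.val + v.val := by
      rw [ZMod.val_add]; exact Nat.mod_add_div _ _
    rw [hq]
    exact_mod_cast congrArg (Nat.cast : ℕ → ℂ) this.symm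
  have h2 : 2 * (Real.pi : ℂ) * Complex.I / p * ((p : ℂ) * q) = q * (2 * Real.pi * Complex.I) := by
    field_simp
  have key : 2 * ↑Real.pi * Complex.I * (u.val : ℂ) / p + 2 * ↑Real.pi * Complex.I * (v.val : ℂ) / p
      = 2 * ↑Real.pi * Complex.I * ((u + v).val : ℂ) / p + (q : ℂ) * (2 * ↑Real.pi * Complex.I) := by
    linear_combination (2 * (Real.pi : ℂ) * Complex.I / p) * hval + h2
  rw [key, Complex.exp_add, Complex.exp_int_mul_two_pi_mul_I, mul_one]

lemma omegaPow_neg (v : ZMod p) : omegaPow p (-v) = (starRingEnd ℂ) (omegaPow p v) := by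
  have h1 : omegaPow p v * omegaPow p (-v) = 1 := by
    rw [← omegaPow_add]; simp [omegaPow_zero]
  have h2 : omegaPow p v * (starRingEnd ℂ) (omegaPow p v) = 1 := by
    rw [Complex.mul_conj]
    norm_cast
    rw [← Complex.sq_norm, abs_omegaPow, one_pow]
  have hne : omegaPow p v ≠ 0 := by
    intro h; rw [h, zero_mul] at h1; exact one_ne_zero h1.symm
  exact mul_left_cancel₀ hne (h1.trans h2.symm)

lemma sum_omegaPow (hp : p.Prime) : ∑ ν : ZMod p, omegaPow p ν = 0 := by
  have hprim : IsPrimitiveRoot (Complex.exp (2 * Real.pi * Complex.I / p)) p :=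
    Complex.isPrimitiveRoot_exp p (NeZero.ne p)
  have hform : ∀ v : ZMod p, omegaPow p v = Complex.exp (2 * Real.pi * Complex.I / p) ^ v.val := by
    intro v
    rw [← Complex.exp_nat_mul]
    unfold omegaPow
    congr 1
    ring
  have h1 : ∑ ν : ZMod p, omegaPow p ν
      = ∑ i ∈ Finset.range p, Complex.exp (2 * Real.pi * Complex.I / p) ^ i := by
    simp_rw [hform]
    obtain ⟨n, rfl⟩ : ∃ n, p = n + 1 := ⟨p - 1, (Nat.succ_pred_eq_of_pos hp.pos).symm⟩
    rw [← Fin.sum_univ_eq_sum_range]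
    rfl
  rw [h1, hprim.geom_sum_eq_zero hp.one_lt]

lemma sum_omegaPow_mul (hp : p.Prime) (c : ZMod p) :
    ∑ ν : ZMod p, omegaPow p (c * ν) = if c = 0 then (p : ℂ) else 0 := by
  haveI : Fact p.Prime := ⟨hp⟩
  split_ifs with hc
  · simp [hc, omegaPow_zero, Finset.card_univ, ZMod.card]
  · rw [← sum_omegaPow p hp]
    exact Fintype.sum_equiv (Equiv.mulLeft₀ c hc) _ _ (fun ν => rfl)

end aux


lemma key_abs (p : ℕ) [NeZero p] (hp : p.Prime) (ho : Odd p)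
    (k : ZMod p) (hk : k ≠ 0) (c d : ZMod p) (hc : c ≠ 0) :
    ‖∑ μ : ZMod p,
        omegaPow p (-(k * (μ * (μ - 1) * (2 : ZMod p)⁻¹ * c + μ * d)))‖ = Real.sqrt p := by
  haveI : Fact p.Prime := ⟨hp⟩
  have hp2 : (2 : ZMod p) ≠ 0 := by
    intro h
    have h2 : ((2 : ℕ) : ZMod p) = 0 := by exact_mod_cast h
    have := (ZMod.natCast_eq_zero_iff 2 p).mp h2
    have hpe : p = 2 := (Nat.prime_dvd_prime_iff_eq hp Nat.prime_two).mp this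
    rw [hpe] at ho
    simp [Nat.odd_iff] at ho
  have h2inv : (2 : ZMod p) * (2 : ZMod p)⁻¹ = 1 := mul_inv_cancel₀ hp2
  set h : ZMod p := (2 : ZMod p)⁻¹ with hh
  set g : ZMod p → ZMod p := fun μ => -(k * (μ * (μ - 1) * h * c + μ * d)) with hg
  set T : ℂ := ∑ μ : ZMod p, omegaPow p (g μ) with hT
  have hTT : T * (starRingEnd ℂ) T = (p : ℂ) := by
    rw [hT, map_sum, Finset.sum_mul_sum]
    have step1 : ∀ μ ν : ZMod p,
        omegaPow p (g μ) * (starRingEnd ℂ) (omegaPow p (g ν)) = omegaPow p (g μ - g ν) := by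
      intro μ ν
      rw [← omegaPow_neg, ← omegaPow_add, sub_eq_add_neg]
    calc ∑ μ : ZMod p, ∑ ν : ZMod p, omegaPow p (g μ) * (starRingEnd ℂ) (omegaPow p (g ν))
        = ∑ ν : ZMod p, ∑ μ : ZMod p, omegaPow p (g μ - g ν) := by
          rw [Finset.sum_comm]
          exact Finset.sum_congr rfl fun ν _ => Finset.sum_congr rfl fun μ _ => step1 μ ν
      _ = ∑ ν : ZMod p, ∑ t : ZMod p, omegaPow p (g t) * omegaPow p ((-(k * c * t)) * ν) := by
          refine Finset.sum_congr rfl fun ν _ => ?_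
          rw [← Fintype.sum_equiv (Equiv.addRight ν)
            (fun t => omegaPow p (g t) * omegaPow p ((-(k * c * t)) * ν))
            (fun μ => omegaPow p (g μ - g ν)) ?_]
          intro t
          simp only [Equiv.coe_addRight]
          rw [← omegaPow_add]
          congr 1
          show g t + (-(k * c * t)) * ν = g (t + ν) - g ν
          simp only [hg]
          linear_combination (k * c * t * ν) * h2inv
      _ = ∑ t : ZMod p, omegaPow p (g t) * ∑ ν : ZMod p, omegaPow p ((-(k * c * t)) * ν) := by
          rw [Finset.sum_comm]
          exact Finset.sum_congr rfl fun t _ => (Finset.mul_sum _ _ _).symm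
      _ = ∑ t : ZMod p, omegaPow p (g t) * (if -(k * c * t) = 0 then (p : ℂ) else 0) := by
          exact Finset.sum_congr rfl fun t _ => by rw [sum_omegaPow_mul p hp]
      _ = ∑ t : ZMod p, (if t = 0 then omegaPow p (g t) * p else 0) := by
          refine Finset.sum_congr rfl fun t _ => ?_
          have : -(k * c * t) = 0 ↔ t = 0 := by
            constructor
            · intro hkt
              rcases mul_eq_zero.mp (neg_eq_zero.mp hkt) with h1 | h1
              · exact absurd (mul_eq_zero.mp h1) (by simp [hk, hc])
              · exact h1
            · intro ht; rw [ht, mul_zero, neg_zero]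
          split_ifs with h1 h2 h3
          · rfl
          · exact absurd (this.mp h1) h2
          · exact absurd (this.mpr h3) h1
          · exact mul_zero _
      _ = (p : ℂ) := by
          rw [Finset.sum_ite_eq' Finset.univ (0 : ZMod p)
            (fun t => omegaPow p (g t) * p)]
          simp [hg, omegaPow_zero]
  have hns : Complex.normSq T = (p : ℝ) := by
    rw [Complex.mul_conj] at hTT
    exact_mod_cast hTT
  show ‖T‖ = Real.sqrt p
  rw [Complex.norm_def, hns]
/-- The unit vectors `ψ_{k;i,j} ∈ ℂ^{ZMod p}`:
`ψ_{k;i,j} = p^{-1/2} ∑_μ ω^{-k((μ(μ-1)/2)i + μj)} e_μ` for `i ∈ ZMod p`, and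
`ψ_{k;∞,j} = e_{-j}`. -/
noncomputable def psi (p : ℕ) (k : ZMod p) : Option (ZMod p) → ZMod p → ZMod p → ℂ
  | some i, j => fun μ =>
      ((Real.sqrt p : ℝ) : ℂ)⁻¹ *
        omegaPow p (-(k * (μ * (μ - 1) * (2 : ZMod p)⁻¹ * i + μ * j)))
  | none, j => fun μ => if μ = -j then 1 else 0

lemma inner_some_some (p : ℕ) [NeZero p] (hp : p.Prime) (k a a' j j' : ZMod p) :
    ∑ μ : ZMod p, (starRingEnd ℂ) (psi p k (some a) j μ) * psi p k (some a') j' μ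
      = ((p : ℝ) : ℂ)⁻¹ * ∑ μ : ZMod p,
          omegaPow p (-(k * (μ * (μ - 1) * (2 : ZMod p)⁻¹ * (a' - a) + μ * (j' - j)))) := by
  rw [Finset.mul_sum]
  refine Finset.sum_congr rfl fun μ _ => ?_
  simp only [psi]
  rw [map_mul, map_inv₀, Complex.conj_ofReal, ← omegaPow_neg, neg_neg]
  have hre : ((Real.sqrt p : ℝ) : ℂ)⁻¹ * ((Real.sqrt p : ℝ) : ℂ)⁻¹ = ((p : ℝ) : ℂ)⁻¹ := by
    rw [← mul_inv]
    norm_cast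
    rw [Real.mul_self_sqrt (by positivity)]
  rw [mul_mul_mul_comm, hre, ← omegaPow_add]
  congr 2
  ring


/-- For every odd prime `p`, every `k ≠ 0`, all `i,i' ∈ ZMod p ∪ {∞}`
and all `j,j' ∈ ZMod p`: if `i ≠ i'` then `|⟨ψ_{k;i,j}, ψ_{k;i',j'}⟩| = 1/√p`, while if
`i = i'` then the absolute value of the inner product is `1` for `j = j'` and `0` for
`j ≠ j'`.  (Thus for fixed `k` the `p+1` families `{ψ_{k;i,j}}_j` form `p+1` mutually
unbiased orthonormal bases of `ℂ^{ZMod p}`.) -/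
theorem heisenberg_psi_mub (p : ℕ) [NeZero p] (hp : p.Prime) (ho : Odd p)
    (k : ZMod p) (hk : k ≠ 0) (i i' : Option (ZMod p)) (j j' : ZMod p) :
    (i ≠ i' →
      ‖∑ μ : ZMod p, (starRingEnd ℂ) (psi p k i j μ) * psi p k i' j' μ‖ =
        1 / Real.sqrt p) ∧
    (i = i' →
      ‖∑ μ : ZMod p, (starRingEnd ℂ) (psi p k i j μ) * psi p k i' j' μ‖ =
        if j = j' then 1 else 0) := by
  haveI : Fact p.Prime := ⟨hp⟩
  have hpR : (0 : ℝ) < p := by exact_mod_cast hp.pos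
  have hss : Real.sqrt p * Real.sqrt p = p := Real.mul_self_sqrt hpR.le
  have hs0 : Real.sqrt p ≠ 0 := by positivity
  have habs_psi_some : ∀ (a jj : ZMod p) (μ : ZMod p),
      ‖psi p k (some a) jj μ‖ = 1 / Real.sqrt p := by
    intro a jj μ
    simp only [psi]
    rw [norm_mul, norm_inv, Complex.norm_real, Real.norm_eq_abs, abs_omegaPow, mul_one,
      abs_of_pos (Real.sqrt_pos.mpr hpR), one_div]
  constructor
  · intro hne
    cases i with
    | none =>
      cases i' with
      | none => exact absurd rfl hne
      | some a' =>
        have : ∑ μ : ZMod p, (starRingEnd ℂ) (psi p k none j μ) * psi p k (some a') j' μ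
            = psi p k (some a') j' (-j) := by
          simp only [psi]
          simp [apply_ite (starRingEnd ℂ), ite_mul, one_mul, zero_mul]
        rw [this, habs_psi_some]
    | some a =>
      cases i' with
      | none =>
        have : ∑ μ : ZMod p, (starRingEnd ℂ) (psi p k (some a) j μ) * psi p k none j' μ
            = (starRingEnd ℂ) (psi p k (some a) j (-j')) := by
          simp only [psi]
          simp [mul_ite, mul_one, mul_zero]
        rw [this, Complex.norm_conj, habs_psi_some]
      | some a' =>
        have haa : a ≠ a' := fun h => hne (by rw [h])
        rw [inner_some_some p hp k a a' j j', norm_mul,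
          key_abs p hp ho k hk (a' - a) (j' - j) (sub_ne_zero.mpr (Ne.symm haa)),
          norm_inv, Complex.norm_real, Real.norm_eq_abs, abs_of_pos hpR]
        field_simp
        exact Real.sq_sqrt hpR.le
  · intro heq
    subst heq
    cases i with
    | none =>
      have : ∑ μ : ZMod p, (starRingEnd ℂ) (psi p k none j μ) * psi p k none j' μ
          = if j' = j then (1 : ℂ) else 0 := by
        simp only [psi]
        simp [apply_ite (starRingEnd ℂ), ite_mul, one_mul, zero_mul, Finset.sum_ite_eq',
          neg_inj]
      rw [this]
      rcases eq_or_ne j j' with h | h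
      · simp [h]
      · simp [h, h.symm]
    | some a =>
      rw [inner_some_some p hp k a a j j']
      have harg : ∀ μ : ZMod p,
          -(k * (μ * (μ - 1) * (2 : ZMod p)⁻¹ * (a - a) + μ * (j' - j)))
            = (-(k * (j' - j))) * μ := fun μ => by ring
      simp_rw [harg, sum_omegaPow_mul p hp]
      have hiff : -(k * (j' - j)) = 0 ↔ j = j' := by
        rw [neg_eq_zero, mul_eq_zero]
        constructor
        · rintro (h | h)
          · exact absurd h hk
          · exact (sub_eq_zero.mp h).symm
        · intro h; right; rw [h, sub_self]
      simp only [hiff]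
      split_ifs with hjj
      · have h1 : ((p : ℝ) : ℂ)⁻¹ * (p : ℂ) = 1 := by
          push_cast
          exact inv_mul_cancel₀ (by exact_mod_cast hpR.ne')
        rw [h1, norm_one]
      · rw [mul_zero, norm_zero]
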